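/- Let Γ be a finite group, T a right Γ-graph, and (K,L) a pair of finite Γ-simplicial complexes (L a Γ-subcomplex of K). Then for every integer r ≥ 2, the pair (A_T(Sd^r(K)), A_T(Sd^r(L))) is a 2^{r-2}-NDR pair of graphs. -/

import Mathlib

universe u

/-- An abstract simplicial complex on the vertex type `V`: a family of finite subsets of `V`
closed under taking subsets. -/
structure Cplx (V : Type*) where
  faces : Set (Set V)
  finite_mem : ∀ σ ∈ faces, Set.Finite σ
  down_closed : ∀ σ ∈ faces, ∀ τ ⊆ σ, τ ∈ faces

/-- The vertex set of a simplicial complex. -/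
def Cplx.verts {V : Type*} (K : Cplx V) : Set V := {v | ({v} : Set V) ∈ K.faces}

/-- `a` is an action of the group `Γ` on the vertex type of `K` by simplicial automorphisms. -/
def IsCplxAction (Γ : Type*) [Group Γ] {V : Type*} (a : Γ → V → V) (K : Cplx V) : Prop :=
  (∀ v, a 1 v = v) ∧ (∀ γ γ' : Γ, ∀ v, a (γ * γ') v = a γ (a γ' v)) ∧
    ∀ γ : Γ, ∀ σ ∈ K.faces, (a γ) '' σ ∈ K.faces

/-- A simplicial multi-map from `K` to `L`: it assigns to each vertex of `K` a nonempty subset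
of the vertices of `L`, so that `⋃ v ∈ σ, η v` is a simplex of `L` for every simplex `σ` of
`K`. -/
def IsMultiMap {V W : Type*} (K : Cplx V) (L : Cplx W) (η : V → Set W) : Prop :=
  (∀ v ∈ K.verts, (η v).Nonempty) ∧ ∀ σ ∈ K.faces, (⋃ v ∈ σ, η v) ∈ L.faces

/-- A Γ-equivariant simplicial multi-map, i.e. an element of `Map_Γ(K, L)`. -/
def IsEquivMultiMap (Γ : Type*) [Group Γ] {V W : Type*} (a : Γ → V → V) (b : Γ → W → W)
    (K : Cplx V) (L : Cplx W) (η : V → Set W) : Prop :=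
  IsMultiMap K L η ∧ ∀ γ : Γ, ∀ v ∈ K.verts, η (a γ v) = (b γ) '' (η v)

/-- Pointwise order on multi-maps out of `K` (on the vertices of `K`). -/
def mmLE {V W : Type*} (K : Cplx V) (η η' : V → Set W) : Prop := ∀ v ∈ K.verts, η v ⊆ η' v

/-- An element of `Def_Γ(K, L)`: a Γ-equivariant simplicial multi-map `K → K` with
`η v = {v}` for every vertex `v` of the subcomplex `L`. -/
def IsDefMultiMap (Γ : Type*) [Group Γ] {V : Type*} (a : Γ → V → V) (K L : Cplx V)
    (η : V → Set V) : Prop :=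
  IsEquivMultiMap Γ a a K K η ∧ ∀ v ∈ L.verts, η v = {v}

/-- One step of a zigzag in `Def_Γ(K, L)`: both multi-maps lie in `Def_Γ(K, L)` and they are
comparable. -/
def cplxDefStep (Γ : Type*) [Group Γ] {V : Type*} (a : Γ → V → V) (K L : Cplx V)
    (η η' : V → Set V) : Prop :=
  IsDefMultiMap Γ a K L η ∧ IsDefMultiMap Γ a K L η' ∧ (mmLE K η η' ∨ mmLE K η' η)

/-- The Γ-simplicial complex `K` strongly Γ-collapses to its Γ-subcomplex `L`: there is a
simplicial map `f` belonging to the identity component of `Def_Γ(K, L)` (joined to the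
identity by a finite zigzag of pairwise comparable elements) whose image is contained in
`L`. -/
def CplxCollapses (Γ : Type*) [Group Γ] {V : Type*} (a : Γ → V → V) (K L : Cplx V) : Prop :=
  ∃ f : V → V, IsDefMultiMap Γ a K L (fun v => {f v}) ∧
    Relation.ReflTransGen (cplxDefStep Γ a K L) (fun v => {v}) (fun v => {f v}) ∧
    ∀ σ ∈ K.faces, f '' σ ∈ L.faces
/-- The face poset of `K`, realized as the set of nonempty simplices of `K` inside the poset
`Set V` (ordered by inclusion). -/
def facePoset {V : Type*} (K : Cplx V) : Set (Set V) := {σ | σ ∈ K.faces ∧ σ.Nonempty}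

/-- The barycentric subdivision `Sd(K) = Δ(FK)`: the simplicial complex on the nonempty
simplices of `K` whose simplices are the finite chains of the face poset of `K`. -/
def sd {V : Type*} (K : Cplx V) : Cplx (Set V) where
  faces := {c | c.Finite ∧ (∀ σ ∈ c, σ ∈ facePoset K) ∧ IsChain (· ⊆ ·) c}
  finite_mem := fun _ h => h.1
  down_closed := fun c hc d hdc =>
    ⟨hc.1.subset hdc, fun σ hσ => hc.2.1 σ (hdc hσ),
      by exact hc.2.2.mono hdc⟩
/-- The neighborhood `ν_K(L) = ⋃_{v ∈ V(L)} st_K(v)` of the subcomplex `L` in `K`. -/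
def nbhd {V : Type*} (K L : Cplx V) : Cplx V where
  faces := {σ | ∃ v ∈ L.verts, insert v σ ∈ K.faces}
  finite_mem := fun σ h => by
    obtain ⟨v, -, h⟩ := h
    exact (K.finite_mem _ h).subset (Set.subset_insert _ _)
  down_closed := fun σ h τ hτσ => by
    obtain ⟨v, hv, h⟩ := h
    exact ⟨v, hv, K.down_closed _ h _ (Set.insert_subset_insert hτσ)⟩

/-- The iterated neighborhood `ν^r_K(L)` (with `ν^0_K(L) = L`). -/
def nbhdIter {V : Type*} (K L : Cplx V) : ℕ → Cplx V
  | 0 => L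
  | r + 1 => nbhd K (nbhdIter K L r)

/-- `(K, L)` is an `r`-NDR pair of Γ-simplicial complexes: there is a Γ-subcomplex `A` of `K`
containing `ν^r_K(L)` (and `L`) which strongly Γ-collapses to `L`. -/
def IsNDRPair (Γ : Type*) [Group Γ] {V : Type*} (a : Γ → V → V) (K L : Cplx V) (r : ℕ) : Prop :=
  ∃ A : Cplx V, A.faces ⊆ K.faces ∧ L.faces ⊆ A.faces ∧
    (∀ γ : Γ, ∀ σ ∈ A.faces, (a γ) '' σ ∈ A.faces) ∧
    (nbhdIter K L r).faces ⊆ A.faces ∧ CplxCollapses Γ a A L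
/-- The vertex type of the `r`-fold barycentric subdivision of a complex on `V`. -/
def IterT (V : Type u) : ℕ → Type u
  | 0 => V
  | r + 1 => Set (IterT V r)

/-- The iterated barycentric subdivision `Sd^r(K)`. -/
def sdIter {V : Type u} (K : Cplx V) : (r : ℕ) → Cplx (IterT V r)
  | 0 => K
  | r + 1 => sd (sdIter K r)

/-- The action induced on the vertices of the `r`-fold barycentric subdivision. -/
def actIter {Γ : Type*} {V : Type u} (a : Γ → V → V) : (r : ℕ) → Γ → IterT V r → IterT V r
  | 0 => a
  | r + 1 => fun γ σ => (actIter a r γ) '' σ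

/-- A graph: a symmetric (loops allowed) adjacency relation on the vertex type `V`. -/
structure LGraph (V : Type*) where
  Adj : V → V → Prop
  symm : ∀ v w, Adj v w → Adj w v

/-- A graph homomorphism from `G` to `H`. -/
def IsGraphHom {V W : Type*} (G : LGraph V) (H : LGraph W) (f : V → W) : Prop :=
  ∀ v w, G.Adj v w → H.Adj (f v) (f w)

/-- A multi-homomorphism from `G` to `H`: it assigns to each vertex of `G` a nonempty set of
vertices of `H` so that adjacent vertices have completely adjacent images.  The
multi-homomorphisms, ordered pointwise by inclusion, form the Hom complex `Hom(G, H)`. -/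
def IsMultiHom {V W : Type*} (G : LGraph V) (H : LGraph W) (η : V → Set W) : Prop :=
  (∀ v, (η v).Nonempty) ∧ ∀ v w, G.Adj v w → ∀ x ∈ η v, ∀ y ∈ η w, H.Adj x y

/-- One step of a zigzag in `Hom(G, H)`: both multi-homomorphisms are comparable. -/
def mhStep {V W : Type*} (G : LGraph V) (H : LGraph W) (η η' : V → Set W) : Prop :=
  IsMultiHom G H η ∧ IsMultiHom G H η' ∧ ((∀ v, η v ⊆ η' v) ∨ (∀ v, η' v ⊆ η v))

/-- Two graph homomorphisms are ×-homotopic iff they lie in the same connected component of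
the Hom complex `Hom(G, H)`. -/
def XHomotopic {V W : Type*} (G : LGraph V) (H : LGraph W) (f g : V → W) : Prop :=
  Relation.ReflTransGen (mhStep G H) (fun v => {f v}) (fun v => {g v})

/-- `f : G → H` is a ×-homotopy equivalence. -/
def IsXHomotopyEquiv {V W : Type*} (G : LGraph V) (H : LGraph W) (f : V → W) : Prop :=
  IsGraphHom G H f ∧ ∃ h : W → V, IsGraphHom H G h ∧
    XHomotopic G G (h ∘ f) id ∧ XHomotopic H H (f ∘ h) id
/-- An element of `Def(G, H)`, where `H` is the induced subgraph of `G` on `S`: a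
multi-homomorphism `η : G → G` with `η w = {w}` for every vertex `w` of `H`. -/
def IsDefMultiHom {V : Type*} (G : LGraph V) (S : Set V) (η : V → Set V) : Prop :=
  IsMultiHom G G η ∧ ∀ w ∈ S, η w = {w}

/-- One step of a zigzag in `Def(G, H)`. -/
def defMHStep {V : Type*} (G : LGraph V) (S : Set V) (η η' : V → Set V) : Prop :=
  IsDefMultiHom G S η ∧ IsDefMultiHom G S η' ∧ ((∀ v, η v ⊆ η' v) ∨ (∀ v, η' v ⊆ η v))

/-- The induced subgraph of `G` on `S` is a ×-homotopy deformation retract of `G`: there is a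
graph homomorphism `f` in the identity component of `Def(G, H)` with `f v ∈ S` for every
vertex `v` of `G`. -/
def IsXDefRetract {V : Type*} (G : LGraph V) (S : Set V) : Prop :=
  ∃ f : V → V, IsDefMultiHom G S (fun v => {f v}) ∧
    Relation.ReflTransGen (defMHStep G S) (fun v => {v}) (fun v => {f v}) ∧
    ∀ v, f v ∈ S
/-- A subgraph of `G`: a set of vertices together with a symmetric set of edges of `G`. -/
structure Subgraph {V : Type*} (G : LGraph V) where
  verts : Set V
  Adj : V → V → Prop
  adj_sub : ∀ v w, Adj v w → G.Adj v w
  symm : ∀ v w, Adj v w → Adj w v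

/-- Containment of subgraphs of `G`. -/
def Subgraph.le {V : Type*} {G : LGraph V} (H H' : Subgraph G) : Prop :=
  H.verts ⊆ H'.verts ∧ ∀ v w, H.Adj v w → H'.Adj v w

/-- The neighborhood `ν_G(H)` of the subgraph `H` of `G`: its vertices are the vertices of `G`
adjacent to some vertex of `H`, and its edges are the edges of `G` with at least one endpoint
in `H`. -/
def gnbhd {V : Type*} (G : LGraph V) (H : Subgraph G) : Subgraph G where
  verts := {v | ∃ w ∈ H.verts, G.Adj v w}
  Adj v w := G.Adj v w ∧ (v ∈ H.verts ∨ w ∈ H.verts)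
  adj_sub := fun _ _ h => h.1
  symm := fun _ _ h => ⟨G.symm _ _ h.1, h.2.symm⟩

/-- The iterated neighborhood `ν^r_G(H)` (with `ν^0_G(H) = H`). -/
def gnbhdIter {V : Type*} (G : LGraph V) (H : Subgraph G) : ℕ → Subgraph G
  | 0 => H
  | r + 1 => gnbhd G (gnbhdIter G H r)
/-- A subgraph of `G` regarded as a graph in its own right (on its vertex set). -/
def Subgraph.coe {V : Type*} {G : LGraph V} (H : Subgraph G) : LGraph H.verts where
  Adj x y := H.Adj x y
  symm := fun x y h => H.symm _ _ h

/-- `(G, H)` is an `r`-NDR pair of graphs: there is a subgraph `H'` of `G` containing `H` and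
`ν^r_G(H)` such that `H` is a ×-homotopy deformation retract of `H'`. -/
def GraphNDRPair {V : Type*} (G : LGraph V) (H : Subgraph G) (r : ℕ) : Prop :=
  ∃ H' : Subgraph G, Subgraph.le H H' ∧ Subgraph.le (gnbhdIter G H r) H' ∧
    IsXDefRetract H'.coe {x : H'.verts | (x : V) ∈ H.verts}
/-- `ρ` is a right action of the group `Γ` on the graph `T` by graph automorphisms. -/
def IsRightGraphAction (Γ : Type*) [Group Γ] {VT : Type*} (T : LGraph VT)
    (ρ : Γ → VT → VT) : Prop :=
  (∀ x, ρ 1 x = x) ∧ (∀ γ γ' : Γ, ∀ x, ρ (γ * γ') x = ρ γ' (ρ γ x)) ∧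
    ∀ γ : Γ, IsGraphHom T T (ρ γ)

/-- The orbit relation generating the quotient `Γ\(T × A(K))`: `γ·(x, v) = (xγ⁻¹, γv)`. -/
def ATrel {Γ VT VK : Type*} [Group Γ] (ρ : Γ → VT → VT) (a : Γ → VK → VK)
    (p q : VT × VK) : Prop :=
  ∃ γ : Γ, q = (ρ γ⁻¹ p.1, a γ p.2)

/-- The graph `A_T(K) = Γ\(T × A(K))`: the vertices are the Γ-orbits of pairs of a vertex of
`T` and a vertex of `K`, and two orbits are adjacent iff they contain adjacent
representatives, a pair `(x, v)`, `(y, w)` being adjacent in `T × A(K)` iff `x`, `y` are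
adjacent in `T` and `{v, w}` is a simplex of `K`. -/
def ATgraph {Γ VT VK : Type*} [Group Γ] (T : LGraph VT) (ρ : Γ → VT → VT)
    (K : Cplx VK) (a : Γ → VK → VK) : LGraph (Quot (ATrel ρ a)) where
  Adj c d := ∃ p q : VT × VK, Quot.mk (ATrel ρ a) p = c ∧ Quot.mk (ATrel ρ a) q = d ∧
    T.Adj p.1 q.1 ∧ ({p.2, q.2} : Set VK) ∈ K.faces
  symm := by
    rintro c d ⟨p, q, hp, hq, hT, hK⟩
    exact ⟨q, p, hq, hp, T.symm _ _ hT, by rwa [Set.pair_comm]⟩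

/-- The vertex set of `A_T(L)` inside `A_T(K)` (for a subcomplex `L` of `K`): the orbits of
pairs whose second component is a vertex of `L`. -/
def ATverts {Γ VT VK : Type*} [Group Γ] (ρ : Γ → VT → VT) (a : Γ → VK → VK)
    (L : Cplx VK) : Set (Quot (ATrel ρ a)) :=
  {c | ∃ p : VT × VK, Quot.mk (ATrel ρ a) p = c ∧ p.2 ∈ L.verts}
theorem nbhdIter_faces_subset {V : Type*} {K L : Cplx V} (hLK : L.faces ⊆ K.faces) :
    ∀ r : ℕ, (nbhdIter K L r).faces ⊆ K.faces
  | 0 => hLK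
  | r + 1 => fun σ hσ => by
      obtain ⟨v, -, h⟩ := hσ
      exact K.down_closed _ h _ (Set.subset_insert _ _)

/-- For a subcomplex `L` of `K`, the graph `A_T(L)` regarded as a subgraph of `A_T(K)`. -/
def ATsubgraph {Γ VT VK : Type*} [Group Γ] (T : LGraph VT) (ρ : Γ → VT → VT)
    (K : Cplx VK) (a : Γ → VK → VK) (L : Cplx VK) (hLK : L.faces ⊆ K.faces) :
    Subgraph (ATgraph T ρ K a) where
  verts := ATverts ρ a L
  Adj c d := ∃ p q : VT × VK, Quot.mk (ATrel ρ a) p = c ∧ Quot.mk (ATrel ρ a) q = d ∧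
    T.Adj p.1 q.1 ∧ ({p.2, q.2} : Set VK) ∈ L.faces
  adj_sub := by
    rintro c d ⟨p, q, hp, hq, hT, hL⟩
    exact ⟨p, q, hp, hq, hT, hLK hL⟩
  symm := by
    rintro c d ⟨p, q, hp, hq, hT, hL⟩
    exact ⟨q, p, hq, hp, T.symm _ _ hT, by rwa [Set.pair_comm]⟩

theorem sd_faces_mono {V : Type*} {K L : Cplx V} (h : L.faces ⊆ K.faces) :
    (sd L).faces ⊆ (sd K).faces :=
  fun c hc => ⟨hc.1, fun σ hσ => ⟨h (hc.2.1 σ hσ).1, (hc.2.1 σ hσ).2⟩, hc.2.2⟩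

theorem sdIter_faces_mono {V : Type u} {K L : Cplx V} (h : L.faces ⊆ K.faces) :
    ∀ r : ℕ, (sdIter L r).faces ⊆ (sdIter K r).faces
  | 0 => h
  | r + 1 => sd_faces_mono (sdIter_faces_mono h r)

open Relation

section Ladder
variable {Γ : Type*} [Group Γ] {ι : Type u}

/-- The order complex of a family `P` of sets, ordered by inclusion. -/
def chainCplx (P : Set (Set ι)) : Cplx (Set ι) where
  faces := {c | c.Finite ∧ IsChain (· ⊆ ·) c ∧ ∀ x ∈ c, x ∈ P}
  finite_mem := fun _ h => h.1
  down_closed := fun c hc d hdc =>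
    ⟨hc.1.subset hdc, by exact hc.2.1.mono hdc, fun x hx => hc.2.2 x (hdc hx)⟩

lemma chainCplx_verts (P : Set (Set ι)) : (chainCplx P).verts = P := by
  ext v
  constructor
  · intro h; exact h.2.2 v rfl
  · intro h
    exact ⟨Set.finite_singleton v, Set.Subsingleton.isChain Set.subsingleton_singleton,
      fun x hx => by rwa [Set.mem_singleton_iff.mp hx]⟩

/-- A "good" map for the ladder machinery: preserves `P`, monotone on `P`,
equivariant on `P`, and fixes `B` pointwise. -/
def GoodMap (e : Γ → Set ι → Set ι) (P B : Set (Set ι)) (h : Set ι → Set ι) : Prop :=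
  (∀ x ∈ P, h x ∈ P) ∧ (∀ x ∈ P, ∀ y ∈ P, x ⊆ y → h x ⊆ h y) ∧
  (∀ γ : Γ, ∀ x ∈ P, h (e γ x) = e γ (h x)) ∧ (∀ x ∈ B, h x = x)

/-- Cross-comparability of a pair of maps. -/
def StarPair (P : Set (Set ι)) (α β : Set ι → Set ι) : Prop :=
  ∀ x ∈ P, ∀ y ∈ P, x ⊆ y → (α x ⊆ β y ∨ β y ⊆ α x) ∧ (β x ⊆ α y ∨ α y ⊆ β x)

def LStep (e : Γ → Set ι → Set ι) (P B : Set (Set ι)) (α β : Set ι → Set ι) : Prop :=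
  GoodMap e P B α ∧ GoodMap e P B β ∧ StarPair P α β

def Lad (e : Γ → Set ι → Set ι) (P B : Set (Set ι)) :
    (Set ι → Set ι) → (Set ι → Set ι) → Prop :=
  ReflTransGen (LStep e P B)

lemma StarPair.symm {P : Set (Set ι)} {α β : Set ι → Set ι} (h : StarPair P α β) :
    StarPair P β α := fun x hx y hy hxy => ⟨(h x hx y hy hxy).2, (h x hx y hy hxy).1⟩

lemma LStep.symm {e : Γ → Set ι → Set ι} {P B : Set (Set ι)} {α β : Set ι → Set ι}
    (h : LStep e P B α β) : LStep e P B β α := ⟨h.2.1, h.1, h.2.2.symm⟩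

lemma Lad.symm {e : Γ → Set ι → Set ι} {P B : Set (Set ι)} {α β : Set ι → Set ι}
    (h : Lad e P B α β) : Lad e P B β α := by
  induction h with
  | refl => exact .refl
  | tail _ hstep ih => exact ReflTransGen.trans (ReflTransGen.single hstep.symm) ih

/-- Setup hypotheses for a level of the ladder construction. -/
structure LSetup (e : Γ → Set ι → Set ι) (P B : Set (Set ι)) : Prop where
  pfin : P.Finite
  xfin : ∀ x ∈ P, x.Finite
  xne : ∀ x ∈ P, x.Nonempty
  bp : B ⊆ P
  pinv : ∀ γ : Γ, ∀ x ∈ P, e γ x ∈ P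
  binv : ∀ γ : Γ, ∀ x ∈ B, e γ x ∈ B
  emono : ∀ γ : Γ, ∀ x ∈ P, ∀ y ∈ P, x ⊆ y → e γ x ⊆ e γ y
  einj : ∀ γ : Γ, Function.Injective (e γ)
  ecard : ∀ γ : Γ, ∀ x ∈ P, (e γ x).ncard = x.ncard

lemma goodmap_id {e : Γ → Set ι → Set ι} {P B : Set (Set ι)} : GoodMap e P B id :=
  ⟨fun _ h => h, fun _ _ _ _ h => h, fun _ _ _ => rfl, fun _ _ => rfl⟩

/-- The order homotopy lemma: comparable good maps are ladder-connected. -/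
lemma lad_of_le {e : Γ → Set ι → Set ι} {P B : Set (Set ι)} (hs : LSetup e P B)
    {α β : Set ι → Set ι} (hα : GoodMap e P B α) (hβ : GoodMap e P B β)
    (hle : ∀ x ∈ P, α x ⊆ β x) : Lad e P B β α := by
  classical
  obtain ⟨n0, hn0⟩ : ∃ n0 : ℕ, ∀ x ∈ P, x.ncard ≤ n0 := by
    obtain ⟨n0, hn0⟩ := (hs.pfin.image Set.ncard).bddAbove
    exact ⟨n0, fun x hx => hn0 (Set.mem_image_of_mem _ hx)⟩
  set μ : ℕ → Set ι → Set ι := fun j x => if x.ncard ≤ j then α x else β x with hμ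
  have hμval : ∀ j, ∀ x ∈ P, μ j x = α x ∨ μ j x = β x := by
    intro j x _; by_cases h : x.ncard ≤ j <;> simp [hμ, h]
  have hgood : ∀ j, GoodMap e P B (μ j) := by
    intro j
    refine ⟨?_, ?_, ?_, ?_⟩
    · intro x hx; rcases hμval j x hx with h | h <;> rw [h]
      exacts [hα.1 x hx, hβ.1 x hx]
    · intro x hx y hy hxy
      by_cases hx' : x.ncard ≤ j <;> by_cases hy' : y.ncard ≤ j <;>
        simp only [hμ, hx', hy', if_pos, if_neg, if_true, if_false]
      · exact hα.2.1 x hx y hy hxy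
      · exact (hα.2.1 x hx y hy hxy).trans (hle y hy)
      · exact absurd ((Set.ncard_le_ncard hxy (hs.xfin y hy)).trans hy') hx'
      · exact hβ.2.1 x hx y hy hxy
    · intro γ x hx
      have hc : (e γ x).ncard = x.ncard := hs.ecard γ x hx
      by_cases h : x.ncard ≤ j
      · simp only [hμ, hc, h, if_true, if_pos]; exact hα.2.2.1 γ x hx
      · simp only [hμ, hc, h, if_false, if_neg]; exact hβ.2.2.1 γ x hx
    · intro x hx; by_cases h : x.ncard ≤ j <;> simp only [hμ, h, if_pos, if_neg, if_true,
        if_false]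
      exacts [hα.2.2.2 x hx, hβ.2.2.2 x hx]
  have hstep : ∀ j, LStep e P B (μ j) (μ (j + 1)) := by
    intro j
    refine ⟨hgood j, hgood (j + 1), ?_⟩
    intro x hx y hy hxy
    have hcard : x.ncard ≤ y.ncard := Set.ncard_le_ncard hxy (hs.xfin y hy)
    constructor
    · -- μ j x vs μ (j+1) y
      by_cases hx' : x.ncard ≤ j <;> by_cases hy' : y.ncard ≤ j + 1 <;>
        simp only [hμ, hx', hy', if_pos, if_neg, if_true, if_false]
      · exact Or.inl (hα.2.1 x hx y hy hxy)
      · exact Or.inl ((hα.2.1 x hx y hy hxy).trans (hle y hy))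
      · -- x.ncard > j, y.ncard ≤ j + 1 ⟹ x = y
        have hxy' : x = y := by
          have h1 : x.ncard = y.ncard := le_antisymm hcard (by omega)
          exact Set.eq_of_subset_of_ncard_le hxy h1.ge (hs.xfin y hy)
        subst hxy'; exact Or.inr (hle x hx)
      · exact Or.inl (hβ.2.1 x hx y hy hxy)
    · -- μ (j+1) x vs μ j y
      by_cases hx' : x.ncard ≤ j + 1 <;> by_cases hy' : y.ncard ≤ j <;>
        simp only [hμ, hx', hy', if_pos, if_neg, if_true, if_false]
      · exact Or.inl (hα.2.1 x hx y hy hxy)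
      · exact Or.inl ((hα.2.1 x hx y hy hxy).trans (hle y hy))
      · omega
      · exact Or.inl (hβ.2.1 x hx y hy hxy)
  have hβμ0 : LStep e P B β (μ 0) := by
    have h0 : ∀ x ∈ P, μ 0 x = β x := by
      intro x hx
      have : ¬ x.ncard ≤ 0 := by
        have := Set.ncard_pos (hs.xfin x hx) |>.mpr (hs.xne x hx); omega
      simp [hμ, this]
    refine ⟨hβ, hgood 0, ?_⟩
    intro x hx y hy hxy
    rw [h0 x hx, h0 y hy]
    exact ⟨Or.inl (hβ.2.1 x hx y hy hxy), Or.inl (hβ.2.1 x hx y hy hxy)⟩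
  have hμtop : LStep e P B (μ (n0 + 1)) α := by
    have htop : ∀ x ∈ P, μ (n0 + 1) x = α x := by
      intro x hx; have := hn0 x hx; simp [hμ]; omega
    refine ⟨hgood (n0 + 1), hα, ?_⟩
    intro x hx y hy hxy
    rw [htop x hx, htop y hy]
    exact ⟨Or.inl (hα.2.1 x hx y hy hxy), Or.inl (hα.2.1 x hx y hy hxy)⟩
  have hlad : ∀ j, Lad e P B β (μ j) := by
    intro j; induction j with
    | zero => exact ReflTransGen.single hβμ0
    | succ n ih => exact ih.tail (hstep n)
  exact (hlad (n0 + 1)).tail hμtop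

end Ladder

section Lift
set_option linter.unusedSectionVars false
variable {Γ : Type*} [Group Γ] {ι : Type u}

/-- The nonempty finite chains with elements in `P`. -/
def chainsIn (P : Set (Set ι)) : Set (Set (Set ι)) :=
  {c | c.Finite ∧ c.Nonempty ∧ IsChain (· ⊆ ·) c ∧ ∀ x ∈ c, x ∈ P}

def imap (h : Set ι → Set ι) : Set (Set ι) → Set (Set ι) := fun c => h '' c

def elift (e : Γ → Set ι → Set ι) : Γ → Set (Set ι) → Set (Set ι) := fun γ c => (e γ) '' c

lemma isChain_image {P : Set (Set ι)} {h : Set ι → Set ι}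
    (hmono : ∀ x ∈ P, ∀ y ∈ P, x ⊆ y → h x ⊆ h y)
    {c : Set (Set ι)} (hc : IsChain (· ⊆ ·) c) (hcP : ∀ x ∈ c, x ∈ P) :
    IsChain (· ⊆ ·) (h '' c) := by
  rintro _ ⟨x, hx, rfl⟩ _ ⟨y, hy, rfl⟩ hne
  have hxy : x ⊆ y ∨ y ⊆ x := by
    rcases eq_or_ne x y with rfl | hne'
    · exact Or.inl subset_rfl
    · exact hc hx hy hne'
  rcases hxy with h' | h'
  · exact Or.inl (hmono x (hcP x hx) y (hcP y hy) h')
  · exact Or.inr (hmono y (hcP y hy) x (hcP x hx) h')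

lemma LSetup.lift {e : Γ → Set ι → Set ι} {P B : Set (Set ι)} (hs : LSetup e P B) :
    LSetup (elift e) (chainsIn P) (chainsIn B) where
  pfin := by
    have : chainsIn P ⊆ {t | t ⊆ P} := fun c hc => fun x hx => hc.2.2.2 x hx
    exact (Set.Finite.finite_subsets hs.pfin).subset this
  xfin := fun x hx => hx.1
  xne := fun x hx => hx.2.1
  bp := fun c hc => ⟨hc.1, hc.2.1, hc.2.2.1, fun x hx => hs.bp (hc.2.2.2 x hx)⟩
  pinv := by
    intro γ c hc
    exact ⟨hc.1.image _, hc.2.1.image _, isChain_image (P := P) (fun x hx y hy h => hs.emono γ x hx y hy h) hc.2.2.1 hc.2.2.2,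
      by rintro _ ⟨x, hx, rfl⟩; exact hs.pinv γ x (hc.2.2.2 x hx)⟩
  binv := by
    intro γ c hc
    refine ⟨hc.1.image _, hc.2.1.image _, ?_, ?_⟩
    · exact isChain_image (P := P) (fun x hx y hy h => hs.emono γ x hx y hy h) hc.2.2.1
        (fun x hx => hs.bp (hc.2.2.2 x hx))
    · rintro _ ⟨x, hx, rfl⟩; exact hs.binv γ x (hc.2.2.2 x hx)
  emono := fun γ c _ d _ hcd => Set.image_mono hcd
  einj := fun γ => Set.image_injective.mpr (hs.einj γ)
  ecard := fun γ c hc => Set.ncard_image_of_injective c (hs.einj γ)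

lemma GoodMap.lift {e : Γ → Set ι → Set ι} {P B : Set (Set ι)} (hs : LSetup e P B)
    {h : Set ι → Set ι} (hg : GoodMap e P B h) :
    GoodMap (elift e) (chainsIn P) (chainsIn B) (imap h) := by
  refine ⟨?_, ?_, ?_, ?_⟩
  · intro c hc
    exact ⟨hc.1.image _, hc.2.1.image _, isChain_image hg.2.1 hc.2.2.1 hc.2.2.2,
      by rintro _ ⟨x, hx, rfl⟩; exact hg.1 x (hc.2.2.2 x hx)⟩
  · intro c _ d _ hcd; exact Set.image_mono hcd
  · intro γ c hc
    show h '' ((e γ) '' c) = (e γ) '' (h '' c)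
    rw [Set.image_image, Set.image_image]
    exact Set.image_congr fun x hx => hg.2.2.1 γ x (hc.2.2.2 x hx)
  · intro c hc
    show h '' c = c
    rw [Set.image_congr (fun x hx => hg.2.2.2 x (hc.2.2.2 x hx)), Set.image_id']

lemma LStep.lift {e : Γ → Set ι → Set ι} {P B : Set (Set ι)} (hs : LSetup e P B)
    {α β : Set ι → Set ι} (hst : LStep e P B α β) :
    Lad (elift e) (chainsIn P) (chainsIn B) (imap α) (imap β) := by
  obtain ⟨hα, hβ, hstar⟩ := hst
  set G : Set (Set ι) → Set (Set ι) := fun c => α '' c ∪ β '' c with hG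
  have hcmp : ∀ c ∈ chainsIn P, IsChain (· ⊆ ·) (G c) := by
    intro c hc
    rintro _ (⟨x, hx, rfl⟩ | ⟨x, hx, rfl⟩) _ (⟨y, hy, rfl⟩ | ⟨y, hy, rfl⟩) hne
    · exact isChain_image hα.2.1 hc.2.2.1 hc.2.2.2 (Set.mem_image_of_mem _ hx)
        (Set.mem_image_of_mem _ hy) hne
    · -- α x vs β y
      have hxy : x ⊆ y ∨ y ⊆ x := by
        rcases eq_or_ne x y with rfl | hne'
        · exact Or.inl subset_rfl
        · exact hc.2.2.1 hx hy hne'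
      rcases hxy with h' | h'
      · exact (hstar x (hc.2.2.2 x hx) y (hc.2.2.2 y hy) h').1
      · exact ((hstar y (hc.2.2.2 y hy) x (hc.2.2.2 x hx) h').2).symm
    · -- β x vs α y
      have hxy : x ⊆ y ∨ y ⊆ x := by
        rcases eq_or_ne x y with rfl | hne'
        · exact Or.inl subset_rfl
        · exact hc.2.2.1 hx hy hne'
      rcases hxy with h' | h'
      · exact (hstar x (hc.2.2.2 x hx) y (hc.2.2.2 y hy) h').2
      · exact ((hstar y (hc.2.2.2 y hy) x (hc.2.2.2 x hx) h').1).symm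
    · exact isChain_image hβ.2.1 hc.2.2.1 hc.2.2.2 (Set.mem_image_of_mem _ hx)
        (Set.mem_image_of_mem _ hy) hne
  have hGgood : GoodMap (elift e) (chainsIn P) (chainsIn B) G := by
    refine ⟨?_, ?_, ?_, ?_⟩
    · intro c hc
      refine ⟨(hc.1.image _).union (hc.1.image _), (hc.2.1.image α).mono Set.subset_union_left,
        hcmp c hc, ?_⟩
      rintro _ (⟨x, hx, rfl⟩ | ⟨x, hx, rfl⟩)
      exacts [hα.1 x (hc.2.2.2 x hx), hβ.1 x (hc.2.2.2 x hx)]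
    · intro c _ d _ hcd
      exact Set.union_subset_union (Set.image_mono hcd) (Set.image_mono hcd)
    · intro γ c hc
      show α '' ((e γ) '' c) ∪ β '' ((e γ) '' c) = (e γ) '' (α '' c ∪ β '' c)
      rw [Set.image_union, Set.image_image, Set.image_image, Set.image_image,
        Set.image_image]
      rw [Set.image_congr (fun x hx => hα.2.2.1 γ x (hc.2.2.2 x hx)),
        Set.image_congr (fun x hx => hβ.2.2.1 γ x (hc.2.2.2 x hx))]
    · intro c hc
      show α '' c ∪ β '' c = c
      rw [Set.image_congr (fun x hx => hα.2.2.2 x (hc.2.2.2 x hx)),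
        Set.image_congr (fun x hx => hβ.2.2.2 x (hc.2.2.2 x hx)), Set.image_id',
        Set.union_self]
  have h1 : Lad (elift e) (chainsIn P) (chainsIn B) G (imap α) :=
    lad_of_le hs.lift (hα.lift hs) hGgood (fun c _ => Set.subset_union_left)
  have h2 : Lad (elift e) (chainsIn P) (chainsIn B) G (imap β) :=
    lad_of_le hs.lift (hβ.lift hs) hGgood (fun c _ => Set.subset_union_right)
  exact h1.symm.trans h2

lemma Lad.lift {e : Γ → Set ι → Set ι} {P B : Set (Set ι)} (hs : LSetup e P B)
    {f g : Set ι → Set ι} (h : Lad e P B f g) :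
    Lad (elift e) (chainsIn P) (chainsIn B) (imap f) (imap g) := by
  induction h with
  | refl => exact .refl
  | tail _ hstep ih => exact ih.trans (hstep.lift hs)

end Lift

section Collapse
set_option linter.unusedSectionVars false
variable {Γ : Type*} [Group Γ] {ι : Type u}

lemma biUnion_singleton_eq_image {σ : Set (Set ι)} {g : Set ι → Set ι} :
    (⋃ v ∈ σ, ({g v} : Set (Set ι))) = g '' σ := by
  ext x; simp [eq_comm]

lemma biUnion_pair_eq_union {σ : Set (Set ι)} {α β : Set ι → Set ι} :
    (⋃ v ∈ σ, ({α v, β v} : Set (Set ι))) = α '' σ ∪ β '' σ := by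
  ext x
  simp only [Set.mem_iUnion, Set.mem_insert_iff, Set.mem_singleton_iff, Set.mem_union,
    Set.mem_image]
  constructor
  · rintro ⟨v, hv, rfl | rfl⟩
    exacts [Or.inl ⟨v, hv, rfl⟩, Or.inr ⟨v, hv, rfl⟩]
  · rintro (⟨v, hv, rfl⟩ | ⟨v, hv, rfl⟩)
    exacts [⟨v, hv, Or.inl rfl⟩, ⟨v, hv, Or.inr rfl⟩]

lemma good_defMultiMap {a : Γ → Set ι → Set ι} {P B : Set (Set ι)}
    {g : Set ι → Set ι} (hg : GoodMap a P B g) :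
    IsDefMultiMap Γ a (chainCplx P) (chainCplx B) (fun v => {g v}) := by
  refine ⟨⟨⟨fun v _ => Set.singleton_nonempty _, ?_⟩, ?_⟩, ?_⟩
  · intro σ hσ
    rw [biUnion_singleton_eq_image]
    exact ⟨hσ.1.image _, isChain_image hg.2.1 hσ.2.1 hσ.2.2,
      by rintro _ ⟨x, hx, rfl⟩; exact hg.1 x (hσ.2.2 x hx)⟩
  · intro γ v hv
    rw [chainCplx_verts] at hv
    show ({g (a γ v)} : Set (Set ι)) = a γ '' {g v}
    rw [Set.image_singleton, hg.2.2.1 γ v hv]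
  · intro v hv
    rw [chainCplx_verts] at hv
    show ({g v} : Set (Set ι)) = {v}
    rw [hg.2.2.2 v hv]

lemma lstep_mid_defMultiMap {a : Γ → Set ι → Set ι} {P B : Set (Set ι)}
    {α β : Set ι → Set ι} (h : LStep a P B α β) :
    IsDefMultiMap Γ a (chainCplx P) (chainCplx B) (fun v => {α v, β v}) := by
  obtain ⟨hα, hβ, hstar⟩ := h
  refine ⟨⟨⟨fun v _ => Set.insert_nonempty _ _, ?_⟩, ?_⟩, ?_⟩
  · intro σ hσ
    rw [biUnion_pair_eq_union]
    refine ⟨(hσ.1.image _).union (hσ.1.image _), ?_, ?_⟩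
    · rintro _ (⟨x, hx, rfl⟩ | ⟨x, hx, rfl⟩) _ (⟨y, hy, rfl⟩ | ⟨y, hy, rfl⟩) hne
      · exact isChain_image hα.2.1 hσ.2.1 hσ.2.2 (Set.mem_image_of_mem _ hx)
          (Set.mem_image_of_mem _ hy) hne
      · rcases (eq_or_ne x y).imp_right (hσ.2.1 hx hy) with rfl | (h' | h')
        · exact (hstar x (hσ.2.2 x hx) x (hσ.2.2 x hx) subset_rfl).1
        · exact (hstar x (hσ.2.2 x hx) y (hσ.2.2 y hy) h').1
        · exact ((hstar y (hσ.2.2 y hy) x (hσ.2.2 x hx) h').2).symm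
      · rcases (eq_or_ne x y).imp_right (hσ.2.1 hx hy) with rfl | (h' | h')
        · exact (hstar x (hσ.2.2 x hx) x (hσ.2.2 x hx) subset_rfl).2
        · exact (hstar x (hσ.2.2 x hx) y (hσ.2.2 y hy) h').2
        · exact ((hstar y (hσ.2.2 y hy) x (hσ.2.2 x hx) h').1).symm
      · exact isChain_image hβ.2.1 hσ.2.1 hσ.2.2 (Set.mem_image_of_mem _ hx)
          (Set.mem_image_of_mem _ hy) hne
    · rintro _ (⟨x, hx, rfl⟩ | ⟨x, hx, rfl⟩)
      exacts [hα.1 x (hσ.2.2 x hx), hβ.1 x (hσ.2.2 x hx)]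
  · intro γ v hv
    rw [chainCplx_verts] at hv
    show ({α (a γ v), β (a γ v)} : Set (Set ι)) = a γ '' {α v, β v}
    rw [Set.image_pair, hα.2.2.1 γ v hv, hβ.2.2.1 γ v hv]
  · intro v hv
    rw [chainCplx_verts] at hv
    show ({α v, β v} : Set (Set ι)) = {v}
    rw [hα.2.2.2 v hv, hβ.2.2.2 v hv, Set.pair_eq_singleton]

lemma collapses_of_lad {a : Γ → Set ι → Set ι} {P B : Set (Set ι)}
    {f : Set ι → Set ι} (hl : Lad a P B id f) (hf : GoodMap a P B f)
    (hfB : ∀ x ∈ P, f x ∈ B) :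
    CplxCollapses Γ a (chainCplx P) (chainCplx B) := by
  refine ⟨f, good_defMultiMap hf, ?_, ?_⟩
  · -- zigzag
    have main : ∀ g h : Set ι → Set ι, Lad a P B g h →
        ReflTransGen (cplxDefStep Γ a (chainCplx P) (chainCplx B))
          (fun v => {g v}) (fun v => {h v}) := by
      intro g h hgh
      induction hgh with
      | refl => exact .refl
      | @tail g' h' _ hstep ih =>
        refine ih.trans (ReflTransGen.head (b := fun v => {g' v, h' v}) ?_
          (ReflTransGen.single ?_))
        · exact ⟨good_defMultiMap hstep.1, lstep_mid_defMultiMap hstep,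
            Or.inl (fun v _ => by simp)⟩
        · exact ⟨lstep_mid_defMultiMap hstep, good_defMultiMap hstep.2.1,
            Or.inr (fun v _ => by simp)⟩
    exact main id f hl
  · intro σ hσ
    exact ⟨hσ.1.image _, isChain_image hf.2.1 hσ.2.1 hσ.2.2,
      by rintro _ ⟨x, hx, rfl⟩; exact hfB x (hσ.2.2 x hx)⟩

end Collapse

section Concrete
set_option linter.unusedSectionVars false
variable {Γ : Type*} [Group Γ] {V : Type u}

lemma Cplx.ext' {K L : Cplx V} (h : K.faces = L.faces) : K = L := by
  cases K; cases L; simpa using h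

lemma face_subset_verts {X : Cplx V} {σ : Set V} (h : σ ∈ X.faces) : σ ⊆ X.verts :=
  fun v hv => X.down_closed σ h {v} (Set.singleton_subset_iff.mpr hv)

lemma sd_verts (X : Cplx V) : (sd X).verts = facePoset X := by
  ext c
  constructor
  · intro h; exact h.2.1 c rfl
  · intro h
    exact ⟨Set.finite_singleton c, fun σ hσ => by rwa [Set.mem_singleton_iff.mp hσ],
      Set.Subsingleton.isChain Set.subsingleton_singleton⟩

lemma facePoset_finite {X : Cplx V} (h : X.verts.Finite) : (facePoset X).Finite :=
  (Set.Finite.finite_subsets h).subset fun σ hσ => face_subset_verts hσ.1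

lemma sd_eq_chainCplx (X : Cplx V) : sd X = chainCplx (facePoset X) := by
  apply Cplx.ext'
  ext c
  exact ⟨fun h => ⟨h.1, h.2.2, h.2.1⟩, fun h => ⟨h.1, h.2.2, h.2.1⟩⟩

lemma facePoset_chainCplx (P : Set (Set V)) : facePoset (chainCplx P) = chainsIn P := by
  ext c
  exact ⟨fun h => ⟨h.1.1, h.2, h.1.2.1, h.1.2.2⟩, fun h => ⟨⟨h.1, h.2.2.1, h.2.2.2⟩, h.2.1⟩⟩

variable {a : Γ → V → V}

lemma actIter_one (h1 : ∀ v, a 1 v = v) : ∀ n (v : IterT V n), actIter a n 1 v = v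
  | 0, v => h1 v
  | n + 1, v => by
    show (actIter a n 1) '' v = v
    exact (Set.image_congr fun x _ => actIter_one h1 n x).trans (Set.image_id' _)

lemma actIter_mul (h2 : ∀ γ γ' : Γ, ∀ v, a (γ * γ') v = a γ (a γ' v)) :
    ∀ n (γ γ' : Γ) (v : IterT V n), actIter a n (γ * γ') v = actIter a n γ (actIter a n γ' v)
  | 0, γ, γ', v => h2 γ γ' v
  | n + 1, γ, γ', v => by
    show (actIter a n (γ * γ')) '' v = (actIter a n γ) '' ((actIter a n γ') '' v)
    exact (Set.image_congr fun x _ => actIter_mul h2 n γ γ' x).trans (Set.image_image _ _ _).symm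

lemma actIter_leftinv (h1 : ∀ v, a 1 v = v)
    (h2 : ∀ γ γ' : Γ, ∀ v, a (γ * γ') v = a γ (a γ' v)) (n : ℕ) (γ : Γ) (v : IterT V n) :
    actIter a n γ⁻¹ (actIter a n γ v) = v := by
  rw [← actIter_mul h2, inv_mul_cancel, actIter_one h1]

lemma actIter_inj (h1 : ∀ v, a 1 v = v)
    (h2 : ∀ γ γ' : Γ, ∀ v, a (γ * γ') v = a γ (a γ' v)) (n : ℕ) (γ : Γ) :
    Function.Injective (actIter a n γ) :=
  Function.LeftInverse.injective (g := actIter a n γ⁻¹) (actIter_leftinv h1 h2 n γ)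

/-- Invariance of faces of `sd X` under the induced action. -/
lemma sd_faces_inv {W : Type*} {b : Γ → W → W} {X : Cplx W}
    (hb : ∀ γ : Γ, ∀ σ ∈ X.faces, b γ '' σ ∈ X.faces) :
    ∀ γ : Γ, ∀ c ∈ (sd X).faces, (fun w => b γ '' w) '' c ∈ (sd X).faces := by
  intro γ c hc
  refine ⟨hc.1.image _, ?_, ?_⟩
  · rintro _ ⟨w, hw, rfl⟩
    exact ⟨hb γ w (hc.2.1 w hw).1, ((hc.2.1 w hw).2).image _⟩
  · exact isChain_image (P := Set.univ) (fun x _ y _ hxy => Set.image_mono hxy)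
      hc.2.2 (fun x _ => trivial)

lemma actIter_faces_inv {X : Cplx V} (hX : ∀ γ : Γ, ∀ σ ∈ X.faces, a γ '' σ ∈ X.faces) :
    ∀ n, ∀ γ : Γ, ∀ σ ∈ (sdIter X n).faces, (actIter a n γ) '' σ ∈ (sdIter X n).faces
  | 0 => hX
  | n + 1 => fun γ c hc => sd_faces_inv (fun γ' => actIter_faces_inv hX n γ') γ c hc

lemma verts_inv {W : Type*} {b : Γ → W → W} {X : Cplx W}
    (hX : ∀ γ : Γ, ∀ σ ∈ X.faces, b γ '' σ ∈ X.faces) {γ : Γ} {v : W} (hv : v ∈ X.verts) :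
    b γ v ∈ X.verts := by
  have := hX γ {v} hv
  rwa [Set.image_singleton] at this

end Concrete

section Nbhd
set_option linter.unusedSectionVars false
variable {V : Type u}

lemma verts_mono {X Y : Cplx V} (h : X.faces ⊆ Y.faces) : X.verts ⊆ Y.verts :=
  fun _ hv => h hv

lemma nbhd_mono_right {K X Y : Cplx V} (h : X.faces ⊆ Y.faces) :
    (nbhd K X).faces ⊆ (nbhd K Y).faces := by
  rintro σ ⟨v, hv, hσ⟩
  exact ⟨v, verts_mono h hv, hσ⟩

lemma nbhdIter_mono_right {K X Y : Cplx V} (h : X.faces ⊆ Y.faces) :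
    ∀ n, (nbhdIter K X n).faces ⊆ (nbhdIter K Y n).faces
  | 0 => h
  | n + 1 => nbhd_mono_right (nbhdIter_mono_right h n)

lemma nbhdIter_add (K L : Cplx V) (s t : ℕ) :
    nbhdIter K L (s + t) = nbhdIter K (nbhdIter K L t) s := by
  induction s with
  | zero => rw [Nat.zero_add]; rfl
  | succ n ih =>
    rw [show n + 1 + t = (n + t) + 1 by omega]
    show nbhd K (nbhdIter K L (n + t)) = nbhd K (nbhdIter K (nbhdIter K L t) n)
    rw [ih]

lemma chain_pair {c : Set (Set V)} (hc : IsChain (· ⊆ ·) c) {x y : Set V}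
    (hx : x ∈ c) (hy : y ∈ c) : x ⊆ y ∨ y ⊆ x := by
  rcases eq_or_ne x y with rfl | hne
  · exact Or.inl subset_rfl
  · exact hc hx hy hne

/-- Key subdivision lemma: two neighborhood steps after subdivision are contained in
the subdivision of one neighborhood step. -/
lemma nbhd_two_sd {N Q : Cplx V} (hQN : Q.faces ⊆ N.faces) :
    (nbhdIter (sd N) (sd Q) 2).faces ⊆ (sd (nbhd N Q)).faces := by
  rw [show nbhdIter (sd N) (sd Q) 2 = nbhd (sd N) (nbhd (sd N) (sd Q)) from rfl]
  rintro D ⟨c, hc, hcD⟩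
  -- `c` is a vertex of `ν¹(sd Q)` in `sd N`, and `insert c D ∈ (sd N).faces`.
  have hc' : ({c} : Set (Set V)) ∈ (nbhd (sd N) (sd Q)).faces := hc
  obtain ⟨c₀, hc₀, hcc₀⟩ : ∃ c₀ ∈ (sd Q).verts, insert c₀ ({c} : Set (Set V)) ∈ (sd N).faces := hc'
  rw [sd_verts] at hc₀
  -- `c` is a face of `N` comparable with the `Q`-face `c₀`.
  have hcN : c ∈ facePoset N := hcc₀.2.1 c (Set.mem_insert_of_mem _ rfl)
  have hcomp : c ⊆ c₀ ∨ c₀ ⊆ c :=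
    chain_pair hcc₀.2.2 (Set.mem_insert_of_mem _ rfl) (Set.mem_insert _ _)
  have hDfin : D.Finite := (hcD.1.subset (Set.subset_insert _ _))
  have hDchain : IsChain (· ⊆ ·) D := hcD.2.2.mono (Set.subset_insert _ _)
  refine ⟨hDfin, ?_, hDchain⟩
  intro σ hσ
  have hσN : σ ∈ facePoset N := hcD.2.1 σ (Set.mem_insert_of_mem _ hσ)
  have hσc : σ ⊆ c ∨ c ⊆ σ :=
    chain_pair hcD.2.2 (Set.mem_insert_of_mem _ hσ) (Set.mem_insert _ _)
  refine ⟨?_, hσN.2⟩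
  -- produce v ∈ Q.verts with insert v σ ∈ N.faces
  rcases hσc with hσc | hcσ
  · rcases hcomp with hcc | hcc
    · -- σ ⊆ c ⊆ c₀ : σ is a face of Q
      obtain ⟨v, hv⟩ := hσN.2
      have hσQ : σ ∈ Q.faces := Q.down_closed c₀ hc₀.1 σ (hσc.trans hcc)
      refine ⟨v, ?_, ?_⟩
      · exact Q.down_closed σ hσQ {v} (Set.singleton_subset_iff.mpr hv)
      · rw [Set.insert_eq_self.mpr hv]; exact hσN.1
    · -- c₀ ⊆ c, σ ⊆ c : insert v σ ⊆ c for v ∈ c₀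
      obtain ⟨v, hv⟩ := hc₀.2
      refine ⟨v, Q.down_closed c₀ hc₀.1 {v} (Set.singleton_subset_iff.mpr hv), ?_⟩
      exact N.down_closed c hcN.1 _ (Set.insert_subset (hcc hv) hσc)
  · rcases hcomp with hcc | hcc
    · -- c ⊆ σ, c ⊆ c₀ : take v ∈ c ⊆ c₀
      obtain ⟨v, hv⟩ := hcN.2
      refine ⟨v, Q.down_closed c₀ hc₀.1 {v} (Set.singleton_subset_iff.mpr (hcc hv)), ?_⟩
      rw [Set.insert_eq_self.mpr (hcσ hv)]; exact hσN.1
    · -- c₀ ⊆ c ⊆ σ : take v ∈ c₀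
      obtain ⟨v, hv⟩ := hc₀.2
      refine ⟨v, Q.down_closed c₀ hc₀.1 {v} (Set.singleton_subset_iff.mpr hv), ?_⟩
      rw [Set.insert_eq_self.mpr (hcσ (hcc hv))]; exact hσN.1

lemma nbhd_two_sd_iter {N Q : Cplx V} (hQN : Q.faces ⊆ N.faces) :
    ∀ t, (nbhdIter (sd N) (sd Q) (2 * t)).faces ⊆ (sd (nbhdIter N Q t)).faces := by
  intro t
  induction t with
  | zero => exact fun D hD => hD
  | succ n ih =>
    rw [show 2 * (n + 1) = 2 + 2 * n by ring, nbhdIter_add]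
    intro D hD
    have h1 : (nbhdIter (sd N) (nbhdIter (sd N) (sd Q) (2 * n)) 2).faces ⊆
        (nbhdIter (sd N) (sd (nbhdIter N Q n)) 2).faces := nbhdIter_mono_right ih 2
    have h2 := nbhd_two_sd (N := N) (Q := nbhdIter N Q n) (nbhdIter_faces_subset hQN n)
    exact h2 (h1 hD)

end Nbhd

section Levels
set_option linter.unusedSectionVars false
variable {Γ : Type*} [Group Γ] {V : Type u}

lemma facePoset_sd (X : Cplx V) : facePoset (sd X) = chainsIn (facePoset X) := by
  rw [sd_eq_chainCplx, facePoset_chainCplx]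

variable (K L : Cplx V)

/-- The vertex supports of the auxiliary subcomplexes `A ⊆ Sd^{m+2} K`. -/
def Plev : (m : ℕ) → Set (Set (IterT V (m + 1)))
  | 0 => {σ | σ ∈ facePoset (sdIter K 1) ∧ (σ ∩ (sdIter L 1).verts).Nonempty}
  | m + 1 => chainsIn (Plev m)

/-- The vertex set of `Sd^{m+2} L`. -/
def Blev (m : ℕ) : Set (Set (IterT V (m + 1))) := facePoset (sdIter L (m + 1))

/-- The retraction at each level. -/
def rlev : (m : ℕ) → Set (IterT V (m + 1)) → Set (IterT V (m + 1))
  | 0 => fun σ => σ ∩ (sdIter L 1).verts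
  | m + 1 => imap (rlev m)

variable {a : Γ → V → V}

theorem level_main (h1 : ∀ v, a 1 v = v)
    (h2 : ∀ γ γ' : Γ, ∀ v, a (γ * γ') v = a γ (a γ' v))
    (hK : ∀ γ : Γ, ∀ σ ∈ K.faces, a γ '' σ ∈ K.faces)
    (hL : ∀ γ : Γ, ∀ σ ∈ L.faces, a γ '' σ ∈ L.faces)
    (hLK : L.faces ⊆ K.faces) (hfin : K.verts.Finite) : ∀ m : ℕ,
    (Plev K L m ⊆ facePoset (sdIter K (m + 1))) ∧
    (Blev L m ⊆ Plev K L m) ∧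
    LSetup (actIter a (m + 2)) (Plev K L m) (Blev L m) ∧
    GoodMap (actIter a (m + 2)) (Plev K L m) (Blev L m) (rlev L m) ∧
    (∀ x ∈ Plev K L m, rlev L m x ∈ Blev L m) ∧
    Lad (actIter a (m + 2)) (Plev K L m) (Blev L m) id (rlev L m) := by
  have hKinv := actIter_faces_inv (a := a) hK
  have hLinv := actIter_faces_inv (a := a) hL
  intro m
  induction m with
  | zero =>
    have hsdfin : (sdIter K 1).verts.Finite := by
      have := facePoset_finite hfin; rw [← sd_verts] at this; exact this
    have hWinv : ∀ γ : Γ, ∀ v ∈ (sdIter L 1).verts, actIter a 1 γ v ∈ (sdIter L 1).verts :=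
      fun γ v hv => verts_inv (hLinv 1) hv
    have hPsub : Plev K L 0 ⊆ facePoset (sdIter K 1) := fun σ hσ => hσ.1
    have hBP : Blev L 0 ⊆ Plev K L 0 := by
      intro σ hσ
      refine ⟨⟨sd_faces_mono hLK hσ.1, hσ.2⟩, ?_⟩
      rw [Set.inter_eq_self_of_subset_left (face_subset_verts hσ.1)]
      exact hσ.2
    have hsetup : LSetup (actIter a 2) (Plev K L 0) (Blev L 0) := by
      refine ⟨(facePoset_finite hsdfin).subset hPsub, fun x hx => (sdIter K 1).finite_mem x hx.1.1,
        fun x hx => hx.2.mono Set.inter_subset_left, hBP, ?_, ?_, ?_, ?_, ?_⟩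
      · intro γ σ hσ
        refine ⟨⟨hKinv 1 γ σ hσ.1.1, hσ.1.2.image _⟩, ?_⟩
        obtain ⟨v, hv1, hv2⟩ := hσ.2
        exact ⟨actIter a 1 γ v, Set.mem_image_of_mem _ hv1, hWinv γ v hv2⟩
      · intro γ σ hσ
        exact ⟨hLinv 1 γ σ hσ.1, hσ.2.image _⟩
      · intro γ x _ y _ hxy; exact Set.image_mono hxy
      · intro γ; exact actIter_inj h1 h2 2 γ
      · intro γ x _; exact Set.ncard_image_of_injective x (actIter_inj h1 h2 1 γ)
    have hgood : GoodMap (actIter a 2) (Plev K L 0) (Blev L 0) (rlev L 0) := by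
      refine ⟨?_, ?_, ?_, ?_⟩
      · intro x hx
        refine ⟨⟨(sdIter K 1).down_closed x hx.1.1 _ Set.inter_subset_left, hx.2⟩, ?_⟩
        rw [show rlev L 0 x = x ∩ (sdIter L 1).verts from rfl, Set.inter_assoc,
          Set.inter_self]
        exact hx.2
      · intro x _ y _ hxy; exact Set.inter_subset_inter_left _ hxy
      · intro γ x hx
        show (actIter a 1 γ '' x) ∩ (sdIter L 1).verts = actIter a 1 γ '' (x ∩ (sdIter L 1).verts)
        ext w
        constructor
        · rintro ⟨⟨v, hv, rfl⟩, hw2⟩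
          refine ⟨v, ⟨hv, ?_⟩, rfl⟩
          have := hWinv γ⁻¹ _ hw2
          rwa [actIter_leftinv h1 h2] at this
        · rintro ⟨v, ⟨hv1, hv2⟩, rfl⟩
          exact ⟨Set.mem_image_of_mem _ hv1, hWinv γ v hv2⟩
      · intro x hx
        exact Set.inter_eq_self_of_subset_left (face_subset_verts hx.1)
    have hval : ∀ x ∈ Plev K L 0, rlev L 0 x ∈ Blev L 0 := by
      intro x hx
      refine ⟨⟨((sdIter K 1).finite_mem x hx.1.1).subset Set.inter_subset_left, ?_, ?_⟩, hx.2⟩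
      · intro σ hσ
        have := hσ.2
        exact (Set.ext_iff.mp (sd_verts L) σ).mp this
      · exact hx.1.1.2.2.mono Set.inter_subset_left
    exact ⟨hPsub, hBP, hsetup, hgood, hval,
      lad_of_le hsetup hgood goodmap_id (fun x _ => Set.inter_subset_left)⟩
  | succ m ih =>
    obtain ⟨hPsub, hBP, hsetup, hgood, hval, hlad⟩ := ih
    have hBeq : Blev L (m + 1) = chainsIn (Blev L m) := facePoset_sd (sdIter L (m + 1))
    have hKeq : facePoset (sdIter K (m + 2)) = chainsIn (facePoset (sdIter K (m + 1))) :=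
      facePoset_sd (sdIter K (m + 1))
    have hPsub' : Plev K L (m + 1) ⊆ facePoset (sdIter K (m + 2)) := by
      intro c hc
      rw [hKeq]
      exact ⟨hc.1, hc.2.1, hc.2.2.1, fun x hx => hPsub (hc.2.2.2 x hx)⟩
    have hBP' : Blev L (m + 1) ⊆ Plev K L (m + 1) := by
      rw [hBeq]
      intro c hc
      exact ⟨hc.1, hc.2.1, hc.2.2.1, fun x hx => hBP (hc.2.2.2 x hx)⟩
    have hsetup' : LSetup (actIter a (m + 3)) (Plev K L (m + 1)) (Blev L (m + 1)) := by
      rw [hBeq]; exact hsetup.lift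
    have hgood' : GoodMap (actIter a (m + 3)) (Plev K L (m + 1)) (Blev L (m + 1))
        (rlev L (m + 1)) := by
      rw [hBeq]; exact hgood.lift hsetup
    have hval' : ∀ x ∈ Plev K L (m + 1), rlev L (m + 1) x ∈ Blev L (m + 1) := by
      intro c hc
      rw [hBeq]
      exact ⟨hc.1.image _, hc.2.1.image _, isChain_image hgood.2.1 hc.2.2.1 hc.2.2.2,
        by rintro _ ⟨x, hx, rfl⟩; exact hval x (hc.2.2.2 x hx)⟩
    have hlad' : Lad (actIter a (m + 3)) (Plev K L (m + 1)) (Blev L (m + 1)) id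
        (rlev L (m + 1)) := by
      rw [hBeq]
      have := hlad.lift hsetup
      have hid : imap (ι := IterT V (m + 1)) id = id := by
        funext c; exact Set.image_id c
      rwa [hid] at this
    exact ⟨hPsub', hBP', hsetup', hgood', hval', hlad'⟩

end Levels

section SimpNDR
set_option linter.unusedSectionVars false
variable {Γ : Type*} [Group Γ] {V : Type u} (K L : Cplx V)

theorem contain_main (hLK : L.faces ⊆ K.faces) : ∀ m : ℕ,
    (nbhdIter (sdIter K (m + 2)) (sdIter L (m + 2)) (2 ^ m)).faces ⊆
      (chainCplx (Plev K L m)).faces := by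
  intro m
  induction m with
  | zero =>
    rw [pow_zero, show nbhdIter (sdIter K 2) (sdIter L 2) 1
      = nbhd (sdIter K 2) (sdIter L 2) from rfl]
    rintro D ⟨c₀, hc₀, hcD⟩
    replace hc₀ : c₀ ∈ facePoset (sdIter L 1) := (Set.ext_iff.mp (sd_verts (sdIter L 1)) c₀).mp hc₀
    have hD : insert c₀ D ∈ (sd (sdIter K 1)).faces := hcD
    have hDD : D ∈ (sd (sdIter K 1)).faces :=
      (sd (sdIter K 1)).down_closed _ hD _ (Set.subset_insert _ _)
    refine ⟨hDD.1, hDD.2.2, ?_⟩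
    intro σ hσ
    have hσK : σ ∈ facePoset (sdIter K 1) := hD.2.1 σ (Set.mem_insert_of_mem _ hσ)
    refine ⟨hσK, ?_⟩
    have hcomp := chain_pair (V := IterT V 1) hD.2.2
      (Set.mem_insert_of_mem _ hσ) (Set.mem_insert _ _)
    have hc₀sub := face_subset_verts (X := sdIter L 1) hc₀.1
    rcases hcomp with h | h
    · obtain ⟨v, hv⟩ := hσK.2
      exact ⟨v, hv, hc₀sub (h hv)⟩
    · obtain ⟨v, hv⟩ := hc₀.2
      exact ⟨v, h hv, hc₀sub hv⟩
  | succ m ih =>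
    rw [pow_succ, mul_comm]
    have step1 : (nbhdIter (sdIter K (m + 3)) (sdIter L (m + 3)) (2 * 2 ^ m)).faces ⊆
        (sd (nbhdIter (sdIter K (m + 2)) (sdIter L (m + 2)) (2 ^ m))).faces :=
      nbhd_two_sd_iter (sdIter_faces_mono hLK (m + 2)) (2 ^ m)
    have step2 := sd_faces_mono ih
    intro D hD
    have h3 := step2 (step1 hD)
    have h5 : D ∈ (chainCplx (chainsIn (Plev K L m))).faces := by
      rw [← facePoset_chainCplx, ← sd_eq_chainCplx]; exact h3
    exact h5

variable {Γ : Type*} [Group Γ] {K L : Cplx V} {a : Γ → V → V}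

theorem simplicial_NDR (h1 : ∀ v, a 1 v = v)
    (h2 : ∀ γ γ' : Γ, ∀ v, a (γ * γ') v = a γ (a γ' v))
    (hK : ∀ γ : Γ, ∀ σ ∈ K.faces, a γ '' σ ∈ K.faces)
    (hL : ∀ γ : Γ, ∀ σ ∈ L.faces, a γ '' σ ∈ L.faces)
    (hLK : L.faces ⊆ K.faces) (hfin : K.verts.Finite) (m : ℕ) :
    ∃ A : Cplx (IterT V (m + 2)),
      A.faces ⊆ (sdIter K (m + 2)).faces ∧ (sdIter L (m + 2)).faces ⊆ A.faces ∧
      (∀ γ : Γ, ∀ σ ∈ A.faces, (actIter a (m + 2) γ) '' σ ∈ A.faces) ∧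
      (nbhdIter (sdIter K (m + 2)) (sdIter L (m + 2)) (2 ^ m)).faces ⊆ A.faces ∧
      CplxCollapses Γ (actIter a (m + 2)) A (sdIter L (m + 2)) := by
  obtain ⟨hPsub, hBP, hsetup, hgood, hval, hlad⟩ := level_main K L h1 h2 hK hL hLK hfin m
  have hLeq : sdIter L (m + 2) = chainCplx (Blev L m) := sd_eq_chainCplx (sdIter L (m + 1))
  refine ⟨chainCplx (Plev K L m), ?_, ?_, ?_, contain_main K L hLK m, ?_⟩
  · intro c hc
    have : (sdIter K (m + 2)) = chainCplx (facePoset (sdIter K (m + 1))) :=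
      sd_eq_chainCplx (sdIter K (m + 1))
    rw [this]
    exact ⟨hc.1, hc.2.1, fun x hx => hPsub (hc.2.2 x hx)⟩
  · rw [hLeq]
    intro c hc
    exact ⟨hc.1, hc.2.1, fun x hx => hBP (hc.2.2 x hx)⟩
  · intro γ σ hσ
    refine ⟨hσ.1.image _, ?_, ?_⟩
    · exact isChain_image (P := Plev K L m) (fun x hx y hy h => hsetup.emono γ x hx y hy h)
        hσ.2.1 hσ.2.2
    · rintro _ ⟨x, hx, rfl⟩
      exact hsetup.pinv γ x (hσ.2.2 x hx)
  · rw [hLeq]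
    exact collapses_of_lad hlad hgood hval

end SimpNDR

section GraphLayer
set_option linter.unusedSectionVars false
variable {Γ VT W : Type*} [Group Γ] {T : LGraph VT} {ρ : Γ → VT → VT} {b : Γ → W → W}

lemma atrel_equivalence (hT : IsRightGraphAction Γ T ρ) (hb1 : ∀ v, b 1 v = v)
    (hb2 : ∀ γ γ' : Γ, ∀ v, b (γ * γ') v = b γ (b γ' v)) : Equivalence (ATrel ρ b) where
  refl p := ⟨1, by rw [inv_one, hT.1, hb1]⟩
  symm := by
    rintro p q ⟨γ, rfl⟩
    refine ⟨γ⁻¹, ?_⟩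
    show p = (ρ γ⁻¹⁻¹ (ρ γ⁻¹ p.1), b γ⁻¹ (b γ p.2))
    rw [← hT.2.1, ← hb2, inv_inv, inv_mul_cancel, hT.1, hb1]
  trans := by
    rintro p q s ⟨γ, rfl⟩ ⟨δ, rfl⟩
    refine ⟨δ * γ, ?_⟩
    show (ρ δ⁻¹ (ρ γ⁻¹ p.1), b δ (b γ p.2)) = (ρ (δ * γ)⁻¹ p.1, b (δ * γ) p.2)
    rw [← hT.2.1, ← hb2, mul_inv_rev]

lemma quot_eq_iff (hT : IsRightGraphAction Γ T ρ) (hb1 : ∀ v, b 1 v = v)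
    (hb2 : ∀ γ γ' : Γ, ∀ v, b (γ * γ') v = b γ (b γ' v)) {p p' : VT × W} :
    Quot.mk (ATrel ρ b) p = Quot.mk (ATrel ρ b) p' ↔ ATrel ρ b p p' := by
  constructor
  · intro h
    exact (Equivalence.eqvGen_iff (atrel_equivalence hT hb1 hb2)).mp (Quot.eqvGen_exact h)
  · exact Quot.sound

lemma snd_mem_verts_of_quot_eq (hT : IsRightGraphAction Γ T ρ) (hb1 : ∀ v, b 1 v = v)
    (hb2 : ∀ γ γ' : Γ, ∀ v, b (γ * γ') v = b γ (b γ' v)) {X : Cplx W}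
    (hXv : ∀ γ : Γ, ∀ v ∈ X.verts, b γ v ∈ X.verts) {p p' : VT × W}
    (h : Quot.mk (ATrel ρ b) p = Quot.mk (ATrel ρ b) p') (hp' : p'.2 ∈ X.verts) :
    p.2 ∈ X.verts := by
  obtain ⟨γ, hγ⟩ := (quot_eq_iff hT hb1 hb2).mp h
  have h2 : p'.2 = b γ p.2 := by rw [hγ]
  have := hXv γ⁻¹ _ hp'
  rw [h2, ← hb2, inv_mul_cancel, hb1] at this
  exact this

lemma adjF_rep (hT : IsRightGraphAction Γ T ρ) (hb1 : ∀ v, b 1 v = v)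
    (hb2 : ∀ γ γ' : Γ, ∀ v, b (γ * γ') v = b γ (b γ' v)) {F : Set (Set W)}
    (hF : ∀ γ : Γ, ∀ σ ∈ F, b γ '' σ ∈ F) {p p' q' : VT × W}
    (hpp' : Quot.mk (ATrel ρ b) p' = Quot.mk (ATrel ρ b) p)
    (hadj : T.Adj p'.1 q'.1) (hfc : ({p'.2, q'.2} : Set W) ∈ F) :
    ∃ qq : VT × W, Quot.mk (ATrel ρ b) qq = Quot.mk (ATrel ρ b) q' ∧ T.Adj p.1 qq.1 ∧
      ({p.2, qq.2} : Set W) ∈ F := by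
  obtain ⟨γ, hγ⟩ := (quot_eq_iff hT hb1 hb2).mp hpp'
  refine ⟨(ρ γ⁻¹ q'.1, b γ q'.2), (Quot.sound ⟨γ, rfl⟩).symm, ?_, ?_⟩
  · rw [hγ]
    exact hT.2.2 γ⁻¹ _ _ hadj
  · rw [hγ]
    show ({b γ p'.2, b γ q'.2} : Set W) ∈ F
    rw [← Set.image_pair]
    exact hF γ _ hfc

variable {Kc : Cplx W}

lemma nbhd_faces_subset' (X : Cplx W) : (nbhd Kc X).faces ⊆ Kc.faces := by
  rintro σ ⟨v, _, h⟩
  exact Kc.down_closed _ h _ (Set.subset_insert _ _)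

lemma nbhd_inv {X : Cplx W} (hKinv : ∀ γ : Γ, ∀ σ ∈ Kc.faces, b γ '' σ ∈ Kc.faces)
    (hXinv : ∀ γ : Γ, ∀ σ ∈ X.faces, b γ '' σ ∈ X.faces) :
    ∀ γ : Γ, ∀ σ ∈ (nbhd Kc X).faces, b γ '' σ ∈ (nbhd Kc X).faces := by
  rintro γ σ ⟨v, hv, h⟩
  refine ⟨b γ v, verts_inv hXinv hv, ?_⟩
  rw [← Set.image_insert_eq]
  exact hKinv γ _ h

lemma nbhdIter_inv {X : Cplx W} (hKinv : ∀ γ : Γ, ∀ σ ∈ Kc.faces, b γ '' σ ∈ Kc.faces)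
    (hXinv : ∀ γ : Γ, ∀ σ ∈ X.faces, b γ '' σ ∈ X.faces) :
    ∀ n, ∀ γ : Γ, ∀ σ ∈ (nbhdIter Kc X n).faces, b γ '' σ ∈ (nbhdIter Kc X n).faces
  | 0 => hXinv
  | n + 1 => nbhd_inv hKinv (nbhdIter_inv hKinv hXinv n)

lemma subgraph_le_refl {VG : Type*} {G : LGraph VG} (H : Subgraph G) : Subgraph.le H H :=
  ⟨subset_rfl, fun _ _ h => h⟩

lemma subgraph_le_trans {VG : Type*} {G : LGraph VG} {H1 H2 H3 : Subgraph G}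
    (h12 : Subgraph.le H1 H2) (h23 : Subgraph.le H2 H3) : Subgraph.le H1 H3 :=
  ⟨h12.1.trans h23.1, fun v w h => h23.2 v w (h12.2 v w h)⟩

lemma gnbhd_mono {VG : Type*} {G : LGraph VG} {H1 H2 : Subgraph G} (h : Subgraph.le H1 H2) :
    Subgraph.le (gnbhd G H1) (gnbhd G H2) := by
  constructor
  · rintro v ⟨w, hw, hadj⟩
    exact ⟨w, h.1 hw, hadj⟩
  · rintro v w ⟨hadj, hor⟩
    exact ⟨hadj, hor.imp (fun hh => h.1 hh) (fun hh => h.1 hh)⟩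

lemma ATsubgraph_mono {X Y : Cplx W} (hXK : X.faces ⊆ Kc.faces) (hYK : Y.faces ⊆ Kc.faces)
    (hXY : X.faces ⊆ Y.faces) :
    Subgraph.le (ATsubgraph T ρ Kc b X hXK) (ATsubgraph T ρ Kc b Y hYK) := by
  constructor
  · rintro c ⟨p, hp, hp2⟩
    exact ⟨p, hp, verts_mono hXY hp2⟩
  · rintro c d ⟨p, q, hp, hq, hTa, hf⟩
    exact ⟨p, q, hp, hq, hTa, hXY hf⟩

lemma gnbhd_le_AT (hT : IsRightGraphAction Γ T ρ) (hb1 : ∀ v, b 1 v = v)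
    (hb2 : ∀ γ γ' : Γ, ∀ v, b (γ * γ') v = b γ (b γ' v)) {X : Cplx W}
    (hXK : X.faces ⊆ Kc.faces)
    (hXinv : ∀ γ : Γ, ∀ σ ∈ X.faces, b γ '' σ ∈ X.faces) :
    Subgraph.le (gnbhd (ATgraph T ρ Kc b) (ATsubgraph T ρ Kc b X hXK))
      (ATsubgraph T ρ Kc b (nbhd Kc X) (nbhd_faces_subset' X)) := by
  have hXv : ∀ γ : Γ, ∀ v ∈ X.verts, b γ v ∈ X.verts := fun γ v hv => verts_inv hXinv hv
  constructor
  · rintro c ⟨d, hd, hadj⟩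
    obtain ⟨p, q, hp, hq, hTa, hf⟩ := hadj
    obtain ⟨q'', hq'', hq''2⟩ := hd
    have hq2 : q.2 ∈ X.verts :=
      snd_mem_verts_of_quot_eq hT hb1 hb2 hXv (hq.trans hq''.symm) hq''2
    refine ⟨p, hp, ?_⟩
    show ({p.2} : Set W) ∈ (nbhd Kc X).faces
    refine ⟨q.2, hq2, ?_⟩
    have : insert q.2 ({p.2} : Set W) = {p.2, q.2} := by
      rw [Set.pair_comm]
    rwa [this]
  · rintro c d ⟨⟨p, q, hp, hq, hTa, hf⟩, hor⟩
    rcases hor with hc | hd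
    · obtain ⟨p'', hp'', hp''2⟩ := hc
      have hp2 : p.2 ∈ X.verts :=
        snd_mem_verts_of_quot_eq hT hb1 hb2 hXv (hp.trans hp''.symm) hp''2
      refine ⟨p, q, hp, hq, hTa, p.2, hp2, ?_⟩
      have : insert p.2 ({p.2, q.2} : Set W) = {p.2, q.2} := Set.insert_eq_self.mpr (by simp)
      rwa [this]
    · obtain ⟨q'', hq'', hq''2⟩ := hd
      have hq2 : q.2 ∈ X.verts :=
        snd_mem_verts_of_quot_eq hT hb1 hb2 hXv (hq.trans hq''.symm) hq''2
      refine ⟨p, q, hp, hq, hTa, q.2, hq2, ?_⟩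
      have : insert q.2 ({p.2, q.2} : Set W) = {p.2, q.2} := Set.insert_eq_self.mpr (by simp)
      rwa [this]

lemma gnbhdIter_le_AT (hT : IsRightGraphAction Γ T ρ) (hb1 : ∀ v, b 1 v = v)
    (hb2 : ∀ γ γ' : Γ, ∀ v, b (γ * γ') v = b γ (b γ' v)) {X : Cplx W}
    (hXK : X.faces ⊆ Kc.faces)
    (hKinv : ∀ γ : Γ, ∀ σ ∈ Kc.faces, b γ '' σ ∈ Kc.faces)
    (hXinv : ∀ γ : Γ, ∀ σ ∈ X.faces, b γ '' σ ∈ X.faces) :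
    ∀ n, Subgraph.le (gnbhdIter (ATgraph T ρ Kc b) (ATsubgraph T ρ Kc b X hXK) n)
      (ATsubgraph T ρ Kc b (nbhdIter Kc X n) (nbhdIter_faces_subset hXK n)) := by
  intro n
  induction n with
  | zero => exact subgraph_le_refl _
  | succ n ih =>
    refine subgraph_le_trans (gnbhd_mono ih) ?_
    exact gnbhd_le_AT hT hb1 hb2 (nbhdIter_faces_subset hXK n)
      (nbhdIter_inv hKinv hXinv n)

end GraphLayer

section Retract
set_option linter.unusedSectionVars false
set_option maxHeartbeats 1000000
variable {Γ VT W : Type*} [Group Γ] {T : LGraph VT} {ρ : Γ → VT → VT} {b : Γ → W → W}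
  {Kc : Cplx W}

theorem AT_XDefRetract (hT : IsRightGraphAction Γ T ρ) (hb1 : ∀ v, b 1 v = v)
    (hb2 : ∀ γ γ' : Γ, ∀ v, b (γ * γ') v = b γ (b γ' v))
    {A Lc : Cplx W} (hAK : A.faces ⊆ Kc.faces) (hLA : Lc.faces ⊆ A.faces)
    (hAinv : ∀ γ : Γ, ∀ σ ∈ A.faces, b γ '' σ ∈ A.faces)
    (hLinv : ∀ γ : Γ, ∀ σ ∈ Lc.faces, b γ '' σ ∈ Lc.faces)
    (hcol : CplxCollapses Γ b A Lc) :
    IsXDefRetract (Subgraph.coe (ATsubgraph T ρ Kc b A hAK))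
      {x : (ATsubgraph T ρ Kc b A hAK).verts |
        (x : Quot (ATrel ρ b)) ∈ ATverts ρ b Lc} := by
  classical
  set H' := ATsubgraph T ρ Kc b A hAK with hH'
  set S : Set H'.verts := {x : H'.verts | (x : Quot (ATrel ρ b)) ∈ ATverts ρ b Lc} with hS
  set qm : VT × W → Quot (ATrel ρ b) := Quot.mk (ATrel ρ b) with hqm
  have hAv : ∀ γ : Γ, ∀ v ∈ A.verts, b γ v ∈ A.verts := fun γ v hv => verts_inv hAinv hv
  have hLv : ∀ γ : Γ, ∀ v ∈ Lc.verts, b γ v ∈ Lc.verts := fun γ v hv => verts_inv hLinv hv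
  have hrepA : ∀ (c : H'.verts) (p : VT × W), qm p = (c : Quot (ATrel ρ b)) →
      p.2 ∈ A.verts := by
    intro c p hp
    obtain ⟨p', hp', hp'2⟩ := c.2
    exact snd_mem_verts_of_quot_eq hT hb1 hb2 hAv (hp.trans hp'.symm) hp'2
  -- a multimap sends vertices into vertices
  have hηA : ∀ {η : W → Set W}, IsMultiMap A A η → ∀ v ∈ A.verts, ∀ w ∈ η v,
      w ∈ A.verts := by
    intro η hη v hv w hw
    have h1 : (⋃ t ∈ ({v} : Set W), η t) ∈ A.faces := hη.2 {v} hv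
    have h2 : η v ∈ A.faces := by simpa using h1
    exact A.down_closed _ h2 {w} (Set.singleton_subset_iff.mpr hw)
  have hpairA : ∀ {η : W → Set W}, IsMultiMap A A η → ∀ {v u w s : W},
      ({v, u} : Set W) ∈ A.faces → w ∈ η v → s ∈ η u → ({w, s} : Set W) ∈ A.faces := by
    intro η hη v u w s hvu hw hs
    have h1 : (⋃ t ∈ ({v, u} : Set W), η t) ∈ A.faces := hη.2 {v, u} hvu
    refine A.down_closed _ h1 {w, s} ?_
    intro z hz
    rcases hz with rfl | hz
    · exact Set.mem_biUnion (Set.mem_insert _ _) hw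
    · rw [Set.mem_singleton_iff] at hz
      subst hz
      exact Set.mem_biUnion (Set.mem_insert_of_mem _ rfl) hs
  -- the hat construction
  set hat : (W → Set W) → (H'.verts → Set H'.verts) := fun η c =>
    {d | ∃ x v w, qm (x, v) = (c : Quot (ATrel ρ b)) ∧ w ∈ η v ∧
      qm (x, w) = (d : Quot (ATrel ρ b))} with hhat
  have hat_mono : ∀ {η η' : W → Set W}, mmLE A η η' → ∀ c, hat η c ⊆ hat η' c := by
    intro η η' hle c d hd
    obtain ⟨x, v, w, hxv, hw, hxw⟩ := hd
    exact ⟨x, v, w, hxv, hle v (hrepA c (x, v) hxv) hw, hxw⟩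
  -- hat of a Def multimap is a Def multihom
  have hat_def : ∀ {η : W → Set W}, IsDefMultiMap Γ b A Lc η →
      IsDefMultiHom H'.coe S (hat η) := by
    intro η hη
    have hmm : IsMultiMap A A η := hη.1.1
    constructor
    · constructor
      · -- nonempty
        intro c
        obtain ⟨p, hp, hp2⟩ := c.2
        obtain ⟨w, hw⟩ := hmm.1 p.2 hp2
        refine ⟨⟨qm (p.1, w), (p.1, w), rfl, hηA hmm p.2 hp2 w hw⟩, ?_⟩
        exact ⟨p.1, p.2, w, hp, hw, rfl⟩
      · -- adjacency
        rintro c d hadj x' hx' y' hy'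
        obtain ⟨p, q, hp, hq, hTa, hface⟩ := hadj
        obtain ⟨x, v, w, hxv, hw, hxw⟩ := hx'
        obtain ⟨y, u, s, hyu, hs, hys⟩ := hy'
        -- transport the edge to the representative (x, v)
        obtain ⟨qq, hqq, hTa2, hface2⟩ := adjF_rep hT hb1 hb2 hAinv
          (hp.trans hxv.symm) hTa hface
        -- relate qq to the representative (y, u)
        obtain ⟨δ, hδ⟩ := (quot_eq_iff hT hb1 hb2).mp ((hqq.trans hq).trans hyu.symm)
        have hqq2A : qq.2 ∈ A.verts := by
          have : ({qq.2} : Set W) ∈ A.faces :=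
            A.down_closed _ hface2 _ (Set.singleton_subset_iff.mpr
              (Set.mem_insert_of_mem _ rfl))
          exact this
        have hu : u = b δ qq.2 := congrArg Prod.snd hδ
        have hy2 : y = ρ δ⁻¹ qq.1 := congrArg Prod.fst hδ
        have hs' : s ∈ b δ '' η qq.2 := by
          rw [← hη.1.2 δ qq.2 hqq2A, ← hu]; exact hs
        obtain ⟨s₀, hs₀, rfl⟩ := hs'
        -- exhibit adjacency
        refine ⟨(x, w), (qq.1, s₀), hxw, ?_, hTa2, ?_⟩
        · rw [← hys]
          refine Quot.sound ⟨δ, ?_⟩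
          show (y, b δ s₀) = (ρ δ⁻¹ qq.1, b δ s₀)
          rw [hy2]
        · exact hpairA hmm hface2 hw hs₀
    · -- fixes S
      intro c hc
      obtain ⟨pL, hpL, hpL2⟩ := hc
      ext d
      constructor
      · rintro ⟨x, v, w, hxv, hw, hxw⟩
        have hvL : v ∈ Lc.verts :=
          snd_mem_verts_of_quot_eq hT hb1 hb2 hLv (hxv.trans hpL.symm) hpL2
        rw [hη.2 v hvL, Set.mem_singleton_iff] at hw
        subst hw
        have : (d : Quot (ATrel ρ b)) = (c : Quot (ATrel ρ b)) := by rw [← hxw, hxv]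
        exact Set.mem_singleton_iff.mpr (Subtype.ext this)
      · intro hd
        rw [Set.mem_singleton_iff] at hd
        subst hd
        obtain ⟨p, hp, hp2⟩ := d.2
        have hvL : p.2 ∈ Lc.verts :=
          snd_mem_verts_of_quot_eq hT hb1 hb2 hLv (hp.trans hpL.symm) hpL2
        refine ⟨p.1, p.2, p.2, hp, ?_, hp⟩
        rw [hη.2 p.2 hvL]
        rfl
  -- map the zigzag
  have hzig : ∀ {η η' : W → Set W},
      Relation.ReflTransGen (cplxDefStep Γ b A Lc) η η' →
      Relation.ReflTransGen (defMHStep H'.coe S) (hat η) (hat η') := by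
    intro η η' h
    induction h with
    | refl => exact .refl
    | tail _ hstep ih =>
      refine ih.tail ?_
      obtain ⟨hd1, hd2, hor⟩ := hstep
      exact ⟨hat_def hd1, hat_def hd2, hor.imp (fun h => hat_mono h) (fun h => hat_mono h)⟩
  -- the retraction f
  obtain ⟨f, hfdef, hfzig, hfim⟩ := hcol
  have hfeq : ∀ γ : Γ, ∀ v ∈ A.verts, f (b γ v) = b γ (f v) := by
    intro γ v hv
    have h := hfdef.1.2 γ v hv
    rw [Set.image_singleton] at h
    exact Set.singleton_eq_singleton_iff.mp h
  have hfverts : ∀ v ∈ A.verts, f v ∈ Lc.verts := by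
    intro v hv
    have h := hfim {v} hv
    rw [Set.image_singleton] at h
    exact h
  have crep : ∀ c : H'.verts, ∃ p : VT × W, qm p = (c : Quot (ATrel ρ b)) ∧
      p.2 ∈ A.verts := fun c => c.2
  set rep : H'.verts → VT × W := fun c => (crep c).choose with hrepdef
  have hrep1 : ∀ c, qm (rep c) = (c : Quot (ATrel ρ b)) := fun c => (crep c).choose_spec.1
  have hrep2 : ∀ c, (rep c).2 ∈ A.verts := fun c => (crep c).choose_spec.2
  set fhat : H'.verts → H'.verts := fun c =>
    ⟨qm ((rep c).1, f (rep c).2),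
      ⟨((rep c).1, f (rep c).2), rfl, verts_mono hLA (hfverts _ (hrep2 c))⟩⟩ with hfhat
  have hat_f_eq : hat (fun v => {f v}) = fun c => {fhat c} := by
    funext c
    ext d
    constructor
    · rintro ⟨x, v, w, hxv, hw, hxw⟩
      rw [Set.mem_singleton_iff] at hw
      subst hw
      obtain ⟨γ, hγ⟩ := (quot_eq_iff hT hb1 hb2).mp ((hxv).trans (hrep1 c).symm)
      have h2 : (rep c).2 = b γ v := congrArg Prod.snd hγ
      have h1 : (rep c).1 = ρ γ⁻¹ x := congrArg Prod.fst hγ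
      have : qm ((rep c).1, f ((rep c).2)) = qm (x, f v) := by
        rw [h2, h1, hfeq γ v (hrepA c (x, v) hxv)]
        exact (Quot.sound ⟨γ, rfl⟩).symm
      rw [Set.mem_singleton_iff]
      apply Subtype.ext
      show (d : Quot (ATrel ρ b)) = qm ((rep c).1, f ((rep c).2))
      rw [this, hxw]
    · intro hd
      rw [Set.mem_singleton_iff] at hd
      subst hd
      exact ⟨(rep c).1, (rep c).2, f ((rep c).2), hrep1 c, rfl, rfl⟩
  have hat_id : hat (fun v => {v}) = fun c => {c} := by
    funext c
    ext d
    constructor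
    · rintro ⟨x, v, w, hxv, hw, hxw⟩
      rw [Set.mem_singleton_iff] at hw
      subst hw
      have : (d : Quot (ATrel ρ b)) = (c : Quot (ATrel ρ b)) := by rw [← hxw, hxv]
      exact Set.mem_singleton_iff.mpr (Subtype.ext this)
    · intro hd
      rw [Set.mem_singleton_iff] at hd
      subst hd
      exact ⟨(rep d).1, (rep d).2, (rep d).2, hrep1 d, rfl, hrep1 d⟩
  refine ⟨fhat, ?_, ?_, ?_⟩
  · have := hat_def hfdef
    rwa [hat_f_eq] at this
  · have h := hzig hfzig
    rwa [hat_id, hat_f_eq] at h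
  · intro c
    exact ⟨((rep c).1, f (rep c).2), rfl, hfverts _ (hrep2 c)⟩

end Retract

/-- Let Γ be a finite group, T a right Γ-graph, and (K,L) a pair of finite
Γ-simplicial complexes.  Then for every integer r ≥ 2, the pair
(A_T(Sd^r(K)), A_T(Sd^r(L))) is a 2^{r-2}-NDR pair of graphs. -/
theorem AT_sdIter_graphNDRPair {Γ VT : Type*} {VK : Type u} [Group Γ] [Finite Γ]
    (T : LGraph VT) (ρ : Γ → VT → VT) (hT : IsRightGraphAction Γ T ρ)
    (K L : Cplx VK) (a : Γ → VK → VK) (ha : IsCplxAction Γ a K)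
    (haL : ∀ γ : Γ, ∀ σ ∈ L.faces, (a γ) '' σ ∈ L.faces)
    (hfin : K.verts.Finite) (hLK : L.faces ⊆ K.faces)
    (r : ℕ) (hr : 2 ≤ r) :
    GraphNDRPair (ATgraph T ρ (sdIter K r) (actIter a r))
      (ATsubgraph T ρ (sdIter K r) (actIter a r) (sdIter L r) (sdIter_faces_mono hLK r))
      (2 ^ (r - 2)) := by
  obtain ⟨m, rfl⟩ : ∃ m, r = m + 2 := ⟨r - 2, by omega⟩
  rw [show m + 2 - 2 = m by omega]
  have hb1 : ∀ v, actIter a (m + 2) 1 v = v := actIter_one ha.1 (m + 2)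
  have hb2 : ∀ γ γ' : Γ, ∀ v, actIter a (m + 2) (γ * γ') v
      = actIter a (m + 2) γ (actIter a (m + 2) γ' v) := fun γ γ' => actIter_mul ha.2.1 (m + 2) γ γ'
  have hKinv := actIter_faces_inv (a := a) ha.2.2 (m + 2)
  have hLinv := actIter_faces_inv (a := a) haL (m + 2)
  obtain ⟨A, hAK, hLA, hAinv, hνA, hcol⟩ :=
    simplicial_NDR (K := K) (L := L) ha.1 ha.2.1 ha.2.2 haL hLK hfin m
  refine ⟨ATsubgraph T ρ (sdIter K (m + 2)) (actIter a (m + 2)) A hAK, ?_, ?_, ?_⟩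
  · exact ATsubgraph_mono _ _ hLA
  · refine subgraph_le_trans
      (gnbhdIter_le_AT hT hb1 hb2 (sdIter_faces_mono hLK (m + 2)) hKinv hLinv (2 ^ m)) ?_
    exact ATsubgraph_mono _ _ hνA
  · exact AT_XDefRetract hT hb1 hb2 hAK hLA hAinv hLinv hcol
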